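/- For nonnegative numbers p₁,…,p_d with Σ p_i = 1 and all p_i > 0, the function f(x) = Π_{i=1}^d (x_i / √p_i)^{p_i} on ℝ^d₊ is a self-dual antinorm: it is concave, positively homogeneous, nonnegative, and satisfies inf{(y,x) : x ∈ ℝ^d₊, f(x) ≥ 1} = f(y) for all y ∈ ℝ^d₊. -/

import Mathlib

/-- The nonnegative orthant in ℝ^d. -/
def orthant (d : ℕ) : Set (EuclideanSpace ℝ (Fin d)) := {x | ∀ i, 0 ≤ x i}

/-- An antinorm on ℝ^d₊: concave, positively homogeneous, nonnegative,
and positive somewhere. -/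
def IsAntinorm {d : ℕ} (f : EuclideanSpace ℝ (Fin d) → ℝ) : Prop :=
  ConcaveOn ℝ (orthant d) f ∧
  (∀ x ∈ orthant d, ∀ c : ℝ, 0 ≤ c → f (c • x) = c * f x) ∧
  (∀ x ∈ orthant d, 0 ≤ f x) ∧
  (∃ x ∈ orthant d, 0 < f x)

/-- The dual antinorm f*(y) = inf{(y,x) : x ∈ ℝ^d₊, f(x) ≥ 1}. -/
noncomputable def dualAntinorm {d : ℕ} (f : EuclideanSpace ℝ (Fin d) → ℝ)
    (y : EuclideanSpace ℝ (Fin d)) : ℝ :=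
  sInf ((fun x => (inner ℝ y x : ℝ)) '' {x | x ∈ orthant d ∧ 1 ≤ f x})

open Finset Real in
lemma aux_prod_mul {d : ℕ} (p : Fin d → ℝ) (hp : ∀ i, 0 < p i)
    (hsum : ∑ i, p i = 1) {c : ℝ} (hc : 0 ≤ c) (z : Fin d → ℝ) (hz : ∀ i, 0 ≤ z i) :
    ∏ i, (c * z i) ^ (p i) = c * ∏ i, (z i) ^ (p i) := by
  have h1 : ∀ i ∈ Finset.univ, (c * z i) ^ (p i) = c ^ (p i) * (z i) ^ (p i) :=
    fun i _ => Real.mul_rpow hc (hz i)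
  rw [Finset.prod_congr rfl h1, Finset.prod_mul_distrib,
    ← Real.rpow_sum_of_nonneg hc (fun i _ => (hp i).le), hsum, Real.rpow_one]

lemma aux_superadd {d : ℕ} (p : Fin d → ℝ) (hp : ∀ i, 0 < p i)
    (hsum : ∑ i, p i = 1) (u v : Fin d → ℝ) (hu : ∀ i, 0 ≤ u i) (hv : ∀ i, 0 ≤ v i) :
    ∏ i, (u i) ^ (p i) + ∏ i, (v i) ^ (p i) ≤ ∏ i, (u i + v i) ^ (p i) := by
  by_cases h : ∀ i, 0 < u i + v i
  · have hP : 0 < ∏ i, (u i + v i) ^ (p i) :=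
      Finset.prod_pos fun i _ => Real.rpow_pos_of_pos (h i) _
    have h1 : ∏ i, (u i / (u i + v i)) ^ (p i) ≤ ∑ i, p i * (u i / (u i + v i)) :=
      Real.geom_mean_le_arith_mean_weighted _ _ _ (fun i _ => (hp i).le) hsum
        (fun i _ => div_nonneg (hu i) (h i).le)
    have h2 : ∏ i, (v i / (u i + v i)) ^ (p i) ≤ ∑ i, p i * (v i / (u i + v i)) :=
      Real.geom_mean_le_arith_mean_weighted _ _ _ (fun i _ => (hp i).le) hsum
        (fun i _ => div_nonneg (hv i) (h i).le)
    have e1 : ∏ i, (u i / (u i + v i)) ^ (p i)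
        = (∏ i, (u i) ^ (p i)) / ∏ i, (u i + v i) ^ (p i) := by
      rw [← Finset.prod_div_distrib]
      exact Finset.prod_congr rfl fun i _ => Real.div_rpow (hu i) (h i).le _
    have e2 : ∏ i, (v i / (u i + v i)) ^ (p i)
        = (∏ i, (v i) ^ (p i)) / ∏ i, (u i + v i) ^ (p i) := by
      rw [← Finset.prod_div_distrib]
      exact Finset.prod_congr rfl fun i _ => Real.div_rpow (hv i) (h i).le _
    have e3 : ∑ i, p i * (u i / (u i + v i)) + ∑ i, p i * (v i / (u i + v i)) = 1 := by
      rw [← Finset.sum_add_distrib, ← hsum]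
      refine Finset.sum_congr rfl fun i _ => ?_
      rw [← mul_add, ← add_div, div_self (h i).ne']
      ring
    rw [e1] at h1; rw [e2] at h2
    have := add_le_add h1 h2
    rw [e3, ← add_div, div_le_one hP] at this
    exact this
  · push_neg at h
    obtain ⟨j, hj⟩ := h
    have hu0 : u j = 0 := le_antisymm (by linarith [hv j]) (hu j)
    have hv0 : v j = 0 := le_antisymm (by linarith [hu j]) (hv j)
    have z1 : ∏ i, (u i) ^ (p i) = 0 :=
      Finset.prod_eq_zero (Finset.mem_univ j) (by rw [hu0]; exact Real.zero_rpow (hp j).ne')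
    have z2 : ∏ i, (v i) ^ (p i) = 0 :=
      Finset.prod_eq_zero (Finset.mem_univ j) (by rw [hv0]; exact Real.zero_rpow (hp j).ne')
    have z3 : ∏ i, (u i + v i) ^ (p i) = 0 :=
      Finset.prod_eq_zero (Finset.mem_univ j)
        (by rw [hu0, hv0, add_zero]; exact Real.zero_rpow (hp j).ne')
    rw [z1, z2, z3]; norm_num


/-- For positive p₁,…,p_d with Σ p_i = 1, the function
f(x) = Π (x_i/√p_i)^{p_i} is a self-dual antinorm on ℝ^d₊. -/
theorem stmt_13 {d : ℕ} (p : Fin d → ℝ) (hp : ∀ i, 0 < p i)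
    (hsum : ∑ i, p i = 1) :
    ConcaveOn ℝ (orthant d)
      (fun x : EuclideanSpace ℝ (Fin d) => ∏ i, (x i / Real.sqrt (p i)) ^ (p i)) ∧
    (∀ x ∈ orthant d, ∀ c : ℝ, 0 ≤ c →
      (∏ i, ((c • x : EuclideanSpace ℝ (Fin d)) i / Real.sqrt (p i)) ^ (p i)) =
        c * ∏ i, (x i / Real.sqrt (p i)) ^ (p i)) ∧
    (∀ x ∈ orthant d, 0 ≤ ∏ i, (x i / Real.sqrt (p i)) ^ (p i)) ∧
    (∀ y ∈ orthant d,
      dualAntinorm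
        (fun x : EuclideanSpace ℝ (Fin d) => ∏ i, (x i / Real.sqrt (p i)) ^ (p i)) y =
        ∏ i, (y i / Real.sqrt (p i)) ^ (p i)) := by
  have hs0 : ∀ i, (0:ℝ) < Real.sqrt (p i) := fun i => Real.sqrt_pos.mpr (hp i)
  -- homogeneity, stated for pi functions
  have hom : ∀ (c : ℝ), 0 ≤ c → ∀ (x : Fin d → ℝ), (∀ i, 0 ≤ x i) →
      ∏ i, (c * x i / Real.sqrt (p i)) ^ (p i)
        = c * ∏ i, (x i / Real.sqrt (p i)) ^ (p i) := by
    intro c hc x hx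
    have : ∀ i ∈ Finset.univ, (c * x i / Real.sqrt (p i)) ^ (p i)
        = (c * (x i / Real.sqrt (p i))) ^ (p i) := by
      intro i _; rw [mul_div_assoc]
    rw [Finset.prod_congr rfl this,
      aux_prod_mul p hp hsum hc _ (fun i => div_nonneg (hx i) (hs0 i).le)]
  have conc : ConcaveOn ℝ (orthant d)
      (fun x : EuclideanSpace ℝ (Fin d) => ∏ i, (x i / Real.sqrt (p i)) ^ (p i)) := by
    constructor
    · intro x hx y hy a b ha hb hab i
      have : (a • x + b • y) i = a * x i + b * y i := rfl
      rw [this]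
      exact add_nonneg (mul_nonneg ha (hx i)) (mul_nonneg hb (hy i))
    · intro x hx y hy a b ha hb hab
      simp only [smul_eq_mul]
      have key := aux_superadd p hp hsum (fun i => a * (x i / Real.sqrt (p i)))
        (fun i => b * (y i / Real.sqrt (p i)))
        (fun i => mul_nonneg ha (div_nonneg (hx i) (hs0 i).le))
        (fun i => mul_nonneg hb (div_nonneg (hy i) (hs0 i).le))
      have e1 : ∏ i, (a * (x i / Real.sqrt (p i))) ^ (p i)
          = a * ∏ i, (x i / Real.sqrt (p i)) ^ (p i) :=
        aux_prod_mul p hp hsum ha _ (fun i => div_nonneg (hx i) (hs0 i).le)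
      have e2 : ∏ i, (b * (y i / Real.sqrt (p i))) ^ (p i)
          = b * ∏ i, (y i / Real.sqrt (p i)) ^ (p i) :=
        aux_prod_mul p hp hsum hb _ (fun i => div_nonneg (hy i) (hs0 i).le)
      have e3 : ∀ i ∈ Finset.univ,
          (a * (x i / Real.sqrt (p i)) + b * (y i / Real.sqrt (p i))) ^ (p i)
          = ((a • x + b • y) i / Real.sqrt (p i)) ^ (p i) := by
        intro i _
        have : (a • x + b • y) i = a * x i + b * y i := rfl
        rw [this, add_div, mul_div_assoc, mul_div_assoc]
      rw [e1, e2, Finset.prod_congr rfl e3] at key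
      exact key
  refine ⟨conc, ?_, ?_, ?_⟩
  · intro x hx c hc
    have : ∀ i ∈ Finset.univ, ((c • x : EuclideanSpace ℝ (Fin d)) i / Real.sqrt (p i)) ^ (p i)
        = (c * x i / Real.sqrt (p i)) ^ (p i) := fun i _ => rfl
    rw [Finset.prod_congr rfl this, hom c hc x hx]
  · intro x hx
    exact Finset.prod_nonneg fun i _ =>
      Real.rpow_nonneg (div_nonneg (hx i) (hs0 i).le) _
  · intro y hy
    rcases Nat.eq_zero_or_pos d with hd | hd
    · subst hd; simp at hsum
    set f : EuclideanSpace ℝ (Fin d) → ℝ :=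
      fun x => ∏ i, (x i / Real.sqrt (p i)) ^ (p i) with hf
    set F : ℝ := ∏ i, (y i / Real.sqrt (p i)) ^ (p i) with hF
    have hFnn : 0 ≤ F := Finset.prod_nonneg fun i _ =>
      Real.rpow_nonneg (div_nonneg (hy i) (hs0 i).le) _
    have hinner : ∀ x : EuclideanSpace ℝ (Fin d), (inner ℝ y x : ℝ) = ∑ i, y i * x i := by
      intro x; simp [PiLp.inner_apply, RCLike.inner_apply, conj_trivial, mul_comm]
    set S : Set ℝ := (fun x => (inner ℝ y x : ℝ)) '' {x | x ∈ orthant d ∧ 1 ≤ f x} with hS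
    -- nonempty
    have hne : S.Nonempty := by
      refine ⟨_, ⟨(WithLp.toLp 2 (fun i => Real.sqrt (p i)) : EuclideanSpace ℝ (Fin d)), ⟨?_, ?_⟩, rfl⟩⟩
      · exact fun i => (hs0 i).le
      · have : ∀ i ∈ Finset.univ,
            ((WithLp.toLp 2 (fun i => Real.sqrt (p i)) : EuclideanSpace ℝ (Fin d)) i / Real.sqrt (p i)) ^ (p i)
            = (1:ℝ) := by
          intro i _
          rw [div_self (hs0 i).ne', Real.one_rpow]
        rw [hf]
        simp only [Finset.prod_congr rfl this, Finset.prod_const_one, le_refl]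
    -- lower bound
    have hlb : ∀ z ∈ S, F ≤ z := by
      rintro _ ⟨x, ⟨hxo, hxf⟩, rfl⟩
      have step1 : F ≤ F * f x := le_mul_of_one_le_right hFnn hxf
      have step2 : F * f x = ∏ i, ((y i * x i) / p i) ^ (p i) := by
        rw [hF, hf, ← Finset.prod_mul_distrib]
        refine Finset.prod_congr rfl fun i _ => ?_
        rw [← Real.mul_rpow (div_nonneg (hy i) (hs0 i).le) (div_nonneg (hxo i) (hs0 i).le),
          div_mul_div_comm, Real.mul_self_sqrt (hp i).le]
      have step3 : ∏ i, ((y i * x i) / p i) ^ (p i) ≤ ∑ i, p i * ((y i * x i) / p i) :=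
        Real.geom_mean_le_arith_mean_weighted _ _ _ (fun i _ => (hp i).le) hsum
          (fun i _ => div_nonneg (mul_nonneg (hy i) (hxo i)) (hp i).le)
      have step4 : ∑ i, p i * ((y i * x i) / p i) = ∑ i, y i * x i := by
        refine Finset.sum_congr rfl fun i _ => ?_
        rw [mul_comm (p i), div_mul_cancel₀ _ (hp i).ne']
      show F ≤ (inner ℝ y x : ℝ)
      rw [hinner x]
      calc F ≤ F * f x := step1
        _ = _ := step2
        _ ≤ _ := step3
        _ = _ := step4
    have hbdd : BddBelow S := ⟨F, hlb⟩
    refine le_antisymm ?_ (le_csInf hne hlb)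
    -- upper bound
    by_cases hpos : ∀ i, 0 < y i
    · have hFpos : 0 < F := Finset.prod_pos fun i _ =>
        Real.rpow_pos_of_pos (div_pos (hpos i) (hs0 i)) _
      set x : EuclideanSpace ℝ (Fin d) := WithLp.toLp 2 (fun i => p i * F / y i) with hx
      have hxo : x ∈ orthant d := fun i =>
        div_nonneg (mul_nonneg (hp i).le hFpos.le) (hpos i).le
      have hxval : ∀ i, x i / Real.sqrt (p i) = F * (Real.sqrt (p i) / y i) := by
        intro i
        have hs : Real.sqrt (p i) * Real.sqrt (p i) = p i := Real.mul_self_sqrt (hp i).le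
        rw [hx]
        dsimp only
        rw [div_div, show p i * F = Real.sqrt (p i) * Real.sqrt (p i) * F by rw [hs]]
        rw [mul_comm (y i), mul_assoc, mul_div_mul_left _ _ (hs0 i).ne']
        rw [mul_comm, mul_div_assoc]
      have hfx : f x = 1 := by
        show (∏ i, (x i / Real.sqrt (p i)) ^ (p i)) = 1
        have : ∀ i ∈ Finset.univ, (x i / Real.sqrt (p i)) ^ (p i)
            = (F * (Real.sqrt (p i) / y i)) ^ (p i) := fun i _ => by rw [hxval i]
        rw [Finset.prod_congr rfl this,
          aux_prod_mul p hp hsum hFpos.le _ (fun i => div_nonneg (hs0 i).le (hpos i).le)]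
        have h2 : ∀ i ∈ Finset.univ, (Real.sqrt (p i) / y i) ^ (p i)
            = ((y i / Real.sqrt (p i)) ^ (p i))⁻¹ := by
          intro i _
          rw [← Real.inv_rpow (div_nonneg (hy i) (hs0 i).le), inv_div]
        rw [Finset.prod_congr rfl h2, Finset.prod_inv_distrib, ← hF,
          mul_inv_cancel₀ hFpos.ne']
      have hval : (inner ℝ y x : ℝ) = F := by
        rw [hinner x]
        have : ∀ i ∈ Finset.univ, y i * x i = p i * F := by
          intro i _
          rw [hx, mul_comm (y i), div_mul_cancel₀ _ (hpos i).ne']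
        rw [Finset.sum_congr rfl this, ← Finset.sum_mul, hsum, one_mul]
      have : F ∈ S := ⟨x, ⟨hxo, hfx.ge⟩, hval⟩
      exact csInf_le hbdd this
    · push_neg at hpos
      obtain ⟨j, hj⟩ := hpos
      have hyj : y j = 0 := le_antisymm hj (hy j)
      have hF0 : F = 0 :=
        Finset.prod_eq_zero (Finset.mem_univ j)
          (by rw [hyj, zero_div]; exact Real.zero_rpow (hp j).ne')
      rw [hF0]
      refine le_of_forall_pos_le_add fun ε hε => ?_
      rw [zero_add]
      set C : ℝ := ∑ i, y i * Real.sqrt (p i) with hC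
      have hCnn : 0 ≤ C := Finset.sum_nonneg fun i _ =>
        mul_nonneg (hy i) (hs0 i).le
      set δ : ℝ := ε / (C + 1) with hδdef
      have hδ : 0 < δ := div_pos hε (by linarith)
      set z : Fin d → ℝ := fun i => if i = j then δ ^ ((p j - 1) / p j) else δ with hz
      have hznn : ∀ i, 0 ≤ z i := by
        intro i; rw [hz]; dsimp only
        split
        · exact Real.rpow_nonneg hδ.le _
        · exact hδ.le
      set x : EuclideanSpace ℝ (Fin d) := WithLp.toLp 2 (fun i => Real.sqrt (p i) * z i) with hx
      have hxo : x ∈ orthant d := fun i => mul_nonneg (hs0 i).le (hznn i)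
      have hdiv : ∀ i, x i / Real.sqrt (p i) = z i := by
        intro i; rw [hx]; exact mul_div_cancel_left₀ _ (hs0 i).ne'
      have hfx : f x = 1 := by
        show (∏ i, (x i / Real.sqrt (p i)) ^ (p i)) = 1
        have e : ∀ i ∈ Finset.univ, (x i / Real.sqrt (p i)) ^ (p i) = (z i) ^ (p i) :=
          fun i _ => by rw [hdiv i]
        rw [Finset.prod_congr rfl e, ← Finset.mul_prod_erase _ _ (Finset.mem_univ j)]
        have ej : (z j) ^ (p j) = δ ^ (p j - 1) := by
          rw [hz]; dsimp only; rw [if_pos rfl, ← Real.rpow_mul hδ.le,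
            div_mul_cancel₀ _ (hp j).ne']
        have eo : ∏ i ∈ Finset.univ.erase j, (z i) ^ (p i) = δ ^ (1 - p j) := by
          have : ∀ i ∈ Finset.univ.erase j, (z i) ^ (p i) = δ ^ (p i) := by
            intro i hi
            rw [hz]; dsimp only
            rw [if_neg (Finset.mem_erase.mp hi).1]
          rw [Finset.prod_congr rfl this,
            ← Real.rpow_sum_of_nonneg hδ.le (fun i _ => (hp i).le)]
          congr 1
          have := Finset.add_sum_erase Finset.univ p (Finset.mem_univ j)
          rw [hsum] at this
          linarith
        rw [ej, eo, ← Real.rpow_add hδ]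
        norm_num
      have hval : (inner ℝ y x : ℝ) = C * δ := by
        rw [hinner x, hC, Finset.sum_mul]
        refine Finset.sum_congr rfl fun i _ => ?_
        by_cases hij : i = j
        · subst hij; rw [hyj]; ring
        · rw [hx]; dsimp only; rw [hz]; dsimp only; rw [if_neg hij]; ring
      have hmem : C * δ ∈ S := ⟨x, ⟨hxo, hfx.ge⟩, hval⟩
      have : C * δ ≤ ε := by
        rw [hδdef]
        have h1 : C / (C + 1) ≤ 1 := by
          rw [div_le_one (by linarith)]; linarith
        calc C * (ε / (C + 1)) = (C / (C + 1)) * ε := by ring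
          _ ≤ 1 * ε := mul_le_mul_of_nonneg_right h1 hε.le
          _ = ε := one_mul ε
      exact le_trans (csInf_le hbdd hmem) this
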